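/- Let G be a right-ordered group, H a convex subgroup of G, and < any right-order on H. Then there exists a right-order on G whose restriction to H is <, and under which H is still convex. -/

import Mathlib

variable {G : Type*} [Group G]

/-- A right order on a group: a strict total order invariant under right multiplication. -/
def IsRightOrder (r : G → G → Prop) : Prop :=
  IsStrictTotalOrder G r ∧ ∀ f g h : G, r f g → r (f * h) (g * h)

/-- `a` is the least element greater than the identity for the order `r`. -/
def LeastPos (r : G → G → Prop) (a : G) : Prop :=
  r 1 a ∧ ∀ g : G, r 1 g → g = a ∨ r a g

theorem stmt16 (r : G → G → Prop) (hr : IsRightOrder r) (H : Subgroup G)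
    (hconv : ∀ x y z : G, x ∈ H → z ∈ H → r x y → r y z → y ∈ H)
    (s : H → H → Prop) (hs : IsRightOrder s) :
    ∃ t : G → G → Prop, IsRightOrder t ∧
      (∀ h h' : H, t h h' ↔ s h h') ∧
      (∀ x y z : G, x ∈ H → z ∈ H → t x y → t y z → y ∈ H) := by
  classical
  obtain ⟨hrt, hrinv⟩ := hr
  obtain ⟨hst, hsinv⟩ := hs
  have rirr : ∀ x : G, ¬ r x x := by haveI := hrt; exact irrefl_of r
  have rtrans : ∀ a b c : G, r a b → r b c → r a c := by haveI := hrt; exact fun a b c => _root_.trans_of r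
  have rtri : ∀ a b : G, r a b ∨ a = b ∨ r b a := by haveI := hrt; exact trichotomous_of r
  have sirr : ∀ x : H, ¬ s x x := by haveI := hst; exact irrefl_of s
  have strans : ∀ a b c : H, s a b → s b c → s a c := by haveI := hst; exact fun a b c => _root_.trans_of s
  have stri : ∀ a b : H, s a b ∨ a = b ∨ s b a := by haveI := hst; exact trichotomous_of s
  -- s-facts
  have sflip : ∀ a : H, s a 1 → s 1 a⁻¹ := by
    intro a h
    have := hsinv a 1 a⁻¹ h
    simpa using this
  refine ⟨fun x y => if h : y * x⁻¹ ∈ H then s 1 ⟨y * x⁻¹, h⟩ else r x y, ?_, ?_, ?_⟩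
  · constructor
    · refine { trichotomous := ?_, irrefl := ?_, trans := ?_ }
      · intro a b hab hba
        refine ((?_ : _ ∨ a = b ∨ _).resolve_left hab).resolve_right hba
        by_cases hm : b * a⁻¹ ∈ H
        · have hm' : a * b⁻¹ ∈ H := by
            have := H.inv_mem hm
            simpa [mul_inv_rev] using this
          rcases stri 1 ⟨b * a⁻¹, hm⟩ with h1 | h1 | h1
          · left; simp [hm, h1]
          · right; left
            have : b * a⁻¹ = (1 : G) := by
              have := congrArg (Subtype.val) h1.symm
              simpa using this
            have := congrArg (fun g => g * a) this
            simpa using this.symm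
          · right; right
            have : s 1 (⟨b * a⁻¹, hm⟩ : H)⁻¹ := sflip _ h1
            have heq : ((⟨b * a⁻¹, hm⟩ : H)⁻¹ : H) = ⟨a * b⁻¹, hm'⟩ := by
              ext; simp [mul_inv_rev]
            rw [heq] at this
            simp [hm', this]
        · have hm' : a * b⁻¹ ∉ H := by
            intro h
            have := H.inv_mem h
            simp [mul_inv_rev] at this
            exact hm this
          rcases rtri a b with h1 | h1 | h1
          · left; simp [hm, h1]
          · right; left; exact h1
          · right; right; simp [hm', h1]
      · -- irrefl
        intro a
        have hm : a * a⁻¹ ∈ H := by simpa using H.one_mem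
        simp only [hm, dif_pos]
        intro h
        have : (⟨a * a⁻¹, hm⟩ : H) = 1 := by ext; simp
        rw [this] at h
        exact sirr 1 h
      · -- trans
        intro x y z hxy hyz
        by_cases ha : y * x⁻¹ ∈ H <;> by_cases hb : z * y⁻¹ ∈ H
        · -- both in H
          have hc : z * x⁻¹ ∈ H := by
            have := H.mul_mem hb ha
            simpa [mul_assoc] using this
          simp only [ha, hb, hc, dif_pos] at hxy hyz ⊢
          have h2 : s ⟨y * x⁻¹, ha⟩ ⟨z * x⁻¹, hc⟩ := by
            have := hsinv 1 ⟨z * y⁻¹, hb⟩ ⟨y * x⁻¹, ha⟩ hyz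
            have heq : (⟨z * y⁻¹, hb⟩ * ⟨y * x⁻¹, ha⟩ : H) = ⟨z * x⁻¹, hc⟩ := by
              ext; simp [mul_assoc]
            rw [heq, one_mul] at this
            exact this
          exact strans _ _ _ hxy h2
        · -- a ∈ H, b ∉ H
          have hc : z * x⁻¹ ∉ H := by
            intro h
            have := H.mul_mem h (H.inv_mem ha)
            simp only [mul_inv_rev, inv_inv] at this
            have : z * y⁻¹ ∈ H := by
              have h2 := this
              simpa [mul_assoc] using h2
            exact hb this
          simp only [ha, hb, hc, dif_pos, dif_neg, not_false_iff] at hxy hyz ⊢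
          -- hxy : s 1 ⟨y*x⁻¹,ha⟩ ; hyz : r y z ; goal r x z
          rcases rtri x z with h1 | h1 | h1
          · exact h1
          · exact absurd (by simpa [← h1] using H.one_mem) hc
          · exfalso
            have h2 : r (y * x⁻¹) (z * x⁻¹) := hrinv _ _ _ hyz
            have h3 : r (z * x⁻¹) 1 := by
              have := hrinv z x x⁻¹ h1
              simpa using this
            exact hc (hconv _ _ _ ha H.one_mem h2 h3)
        · -- a ∉ H, b ∈ H
          have hc : z * x⁻¹ ∉ H := by
            intro h
            have := H.mul_mem (H.inv_mem hb) h
            simp only [mul_inv_rev, inv_inv] at this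
            have : y * x⁻¹ ∈ H := by simpa [mul_assoc] using this
            exact ha this
          simp only [ha, hb, hc, dif_pos, dif_neg, not_false_iff] at hxy hyz ⊢
          rcases rtri x z with h1 | h1 | h1
          · exact h1
          · exact absurd (by simpa [← h1] using H.one_mem) hc
          · exfalso
            have h2 : r (z * y⁻¹) (x * y⁻¹) := hrinv _ _ _ h1
            have h3 : r (x * y⁻¹) 1 := by
              have := hrinv x y y⁻¹ hxy
              simpa using this
            have : x * y⁻¹ ∈ H := hconv _ _ _ hb H.one_mem h2 h3
            have := H.inv_mem this
            simp only [mul_inv_rev, inv_inv] at this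
            exact ha this
        · -- neither
          have hc : z * x⁻¹ ∉ H := by
            intro h
            simp only [ha, hb, dif_neg, not_false_iff] at hxy hyz
            have h2 : r 1 (y * x⁻¹) := by
              have := hrinv x y x⁻¹ hxy
              simpa using this
            have h3 : r (y * x⁻¹) (z * x⁻¹) := hrinv _ _ _ hyz
            exact ha (hconv _ _ _ H.one_mem h h2 h3)
          simp only [ha, hb, hc, dif_neg, not_false_iff] at hxy hyz ⊢
          exact rtrans _ _ _ hxy hyz
    · -- right invariance
      intro f g h hfg
      have heq : g * h * (f * h)⁻¹ = g * f⁻¹ := by group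
      by_cases hm : g * f⁻¹ ∈ H
      · have hm2 : g * h * (f * h)⁻¹ ∈ H := heq ▸ hm
        simp only [hm, hm2, dif_pos] at hfg ⊢
        have : (⟨g * h * (f * h)⁻¹, hm2⟩ : H) = ⟨g * f⁻¹, hm⟩ := by ext; exact heq
        rw [this]
        exact hfg
      · have hm2 : g * h * (f * h)⁻¹ ∉ H := heq ▸ hm
        simp only [hm, hm2, dif_neg, not_false_iff] at hfg ⊢
        exact hrinv _ _ _ hfg
  · -- restriction to H
    intro h h'
    have hm : (h' : G) * (h : G)⁻¹ ∈ H := H.mul_mem h'.2 (H.inv_mem h.2)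
    simp only [hm, dif_pos]
    have heq : (⟨(h' : G) * (h : G)⁻¹, hm⟩ : H) = h' * h⁻¹ := by ext; rfl
    rw [heq]
    constructor
    · intro hh
      have := hsinv 1 (h' * h⁻¹) h hh
      simpa [mul_assoc] using this
    · intro hh
      have := hsinv h h' h⁻¹ hh
      simpa using this
  · -- convexity
    intro x y z hx hz hxy hyz
    by_contra hy
    have ha : y * x⁻¹ ∉ H := by
      intro h
      have := H.mul_mem h hx
      exact hy (by simpa [mul_assoc] using this)
    have hb : z * y⁻¹ ∉ H := by
      intro h
      have := H.mul_mem (H.inv_mem h) hz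
      simp only [mul_inv_rev, inv_inv] at this
      have : y ∈ H := by simpa [mul_assoc] using this
      exact hy this
    simp only [ha, hb, dif_neg, not_false_iff] at hxy hyz
    exact hy (hconv x y z hx hz hxy hyz)
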